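/- The function f(x) = x²/(cosh(ρx) − 1) is strictly decreasing on (0, ∞) for every fixed ρ > 0. -/
import Mathlib

open Real

lemma aux_sinh_lt (t : ℝ) (ht : 0 < t) : Real.sinh t < t * Real.cosh t := by
  have h : StrictMonoOn (fun s : ℝ => s * Real.cosh s - Real.sinh s) (Set.Ici 0) := by
    refine strictMonoOn_of_deriv_pos (convex_Ici _)
      (by fun_prop) fun s hs => ?_
    rw [interior_Ici, Set.mem_Ioi] at hs
    have : HasDerivAt (fun s : ℝ => s * Real.cosh s - Real.sinh s)
        (1 * Real.cosh s + s * Real.sinh s - Real.cosh s) s := by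
      exact ((hasDerivAt_id s).mul (Real.hasDerivAt_cosh s)).sub (Real.hasDerivAt_sinh s)
    rw [this.deriv]
    have : 0 < s * Real.sinh s := mul_pos hs (Real.sinh_pos_iff.2 hs)
    nlinarith
  have := h (Set.self_mem_Ici) (Set.mem_Ici.2 ht.le) ht
  simpa using this

lemma aux_mono : StrictMonoOn (fun t : ℝ => Real.sinh t / t) (Set.Ioi 0) := by
  refine strictMonoOn_of_deriv_pos (convex_Ioi _)
    (ContinuousOn.div Real.continuous_sinh.continuousOn continuousOn_id
      fun t ht => ne_of_gt ht) fun t ht => ?_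
  rw [interior_Ioi, Set.mem_Ioi] at ht
  have hd : HasDerivAt (fun t : ℝ => Real.sinh t / t)
      ((Real.cosh t * t - Real.sinh t * 1) / t ^ 2) t :=
    (Real.hasDerivAt_sinh t).div (hasDerivAt_id t) (ne_of_gt ht)
  rw [hd.deriv]
  have := aux_sinh_lt t ht
  have ht2 : 0 < t ^ 2 := by positivity
  apply div_pos _ ht2
  nlinarith

theorem stmt10 (ρ : ℝ) (hρ : 0 < ρ) :
    StrictAntiOn (fun x : ℝ => x ^ 2 / (Real.cosh (ρ * x) - 1)) (Set.Ioi 0) := by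
  intro x hx y hy hxy
  rw [Set.mem_Ioi] at hx hy
  have hsx : Real.cosh (ρ * x) - 1 = 2 * Real.sinh (ρ * x / 2) ^ 2 := by
    have : ρ * x = 2 * (ρ * x / 2) := by ring
    rw [this, Real.cosh_two_mul, Real.cosh_sq]; ring
  have hsy : Real.cosh (ρ * y) - 1 = 2 * Real.sinh (ρ * y / 2) ^ 2 := by
    have : ρ * y = 2 * (ρ * y / 2) := by ring
    rw [this, Real.cosh_two_mul, Real.cosh_sq]; ring
  have hax : 0 < ρ * x / 2 := by positivity
  have hay : 0 < ρ * y / 2 := by positivity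
  have hsxp : 0 < Real.sinh (ρ * x / 2) := Real.sinh_pos_iff.2 hax
  have hsyp : 0 < Real.sinh (ρ * y / 2) := Real.sinh_pos_iff.2 hay
  have hdx : 0 < Real.cosh (ρ * x) - 1 := by rw [hsx]; positivity
  have hdy : 0 < Real.cosh (ρ * y) - 1 := by rw [hsy]; positivity
  have key : Real.sinh (ρ * x / 2) / (ρ * x / 2) < Real.sinh (ρ * y / 2) / (ρ * y / 2) :=
    aux_mono (Set.mem_Ioi.2 hax) (Set.mem_Ioi.2 hay) (by nlinarith)
  have key2 : y * Real.sinh (ρ * x / 2) < x * Real.sinh (ρ * y / 2) := by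
    rw [div_lt_div_iff₀ hax hay] at key
    nlinarith
  simp only
  rw [div_lt_div_iff₀ hdy hdx, hsx, hsy]
  nlinarith [mul_pos hy hsxp, mul_pos hx hsyp]
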